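/- Let R = {(a,a),(a,b),(b,a)} ⊆ D² with 0 < a < b. Restricted to graphs of maximum degree 3, the Maximum Independent Set problem L-reduces to Max Sol({R}) with parameters β = 4b and γ = 1/(b−a): given a graph G = (V,E) with max degree 3 and no isolated vertices, construct the Max Sol instance with a constraint R(x_i,x_j) for each edge; then opt of the constructed instance is at most 4b times opt of the independent set instance, and from any feasible assignment S', the set of variables assigned b is an independent set whose distance from optimum is at most 1/(b−a) times the distance of S' from optimum. -/

import Mathlib

theorem stmt_13 (V : Type*) [Fintype V] [DecidableEq V]
    (G : SimpleGraph V) [DecidableRel G.Adj]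
    (hdeg : ∀ v, G.degree v ≤ 3)
    (hiso : ∀ v, 0 < G.degree v)
    (a b : ℕ) (ha : 0 < a) (hab : a < b)
    (Feasible : (V → ℕ) → Prop)
    (hFeasible : ∀ s, Feasible s ↔ ∀ v w, G.Adj v w →
      ((s v = a ∧ s w = a) ∨ (s v = a ∧ s w = b) ∨ (s v = b ∧ s w = a)))
    (IndepSet : Finset V → Prop)
    (hIndep : ∀ I, IndepSet I ↔ ∀ v ∈ I, ∀ w ∈ I, ¬ G.Adj v w)
    (optIS : ℕ)
    (hoptIS₁ : ∃ I, IndepSet I ∧ I.card = optIS)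
    (hoptIS₂ : ∀ I, IndepSet I → I.card ≤ optIS)
    (optMS : ℕ)
    (hoptMS₁ : ∃ s, Feasible s ∧ ∑ v, s v = optMS)
    (hoptMS₂ : ∀ s, Feasible s → ∑ v, s v ≤ optMS) :
    optMS ≤ 4 * b * optIS ∧
    ∀ s, Feasible s →
      IndepSet (Finset.univ.filter fun v => s v = b) ∧
      (b - a) * (optIS - (Finset.univ.filter fun v => s v = b).card) ≤
        optMS - ∑ v, s v := by
  classical
  obtain ⟨I, hI, hIcard⟩ := hoptIS₁
  have hIrw := (hIndep I).mp hI
  set n := Fintype.card V with hn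
  -- every feasible assignment takes values in {a, b}
  have hval : ∀ s, Feasible s → ∀ v, s v = a ∨ s v = b := by
    intro s hs v
    have hpos : 0 < (G.neighborFinset v).card := hiso v
    obtain ⟨w, hw⟩ := Finset.card_pos.mp hpos
    rw [SimpleGraph.mem_neighborFinset] at hw
    rcases (hFeasible s).mp hs v w hw with ⟨h, _⟩ | ⟨h, _⟩ | ⟨h, _⟩
    · exact Or.inl h
    · exact Or.inl h
    · exact Or.inr h
  -- the set of variables assigned b is independent
  have hindep : ∀ s, Feasible s → IndepSet (Finset.univ.filter fun v => s v = b) := by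
    intro s hs
    rw [hIndep]
    intro v hv w hw hadj
    have hv' : s v = b := (Finset.mem_filter.mp hv).2
    have hw' : s w = b := (Finset.mem_filter.mp hw).2
    rcases (hFeasible s).mp hs v w hadj with ⟨h1, h2⟩ | ⟨h1, h2⟩ | ⟨h1, h2⟩ <;> omega
  -- the sum formula
  have hsum : ∀ s, Feasible s →
      ∑ v, s v = b * (Finset.univ.filter fun v => s v = b).card
        + a * (Finset.univ.filter fun v => ¬ s v = b).card := by
    intro s hs
    rw [← Finset.sum_filter_add_sum_filter_not Finset.univ (fun v => s v = b) s]
    have e1 : ∀ v ∈ Finset.univ.filter (fun v => s v = b), s v = b :=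
      fun v hv => (Finset.mem_filter.mp hv).2
    have e2 : ∀ v ∈ Finset.univ.filter (fun v => ¬ s v = b), s v = a := by
      intro v hv
      have h1 := hval s hs v
      have h2 := (Finset.mem_filter.mp hv).2
      tauto
    rw [Finset.sum_congr rfl e1, Finset.sum_congr rfl e2, Finset.sum_const, Finset.sum_const]
    simp [mul_comm]
  have hcards : ∀ s : V → ℕ,
      (Finset.univ.filter fun v => s v = b).card
        + (Finset.univ.filter fun v => ¬ s v = b).card = n :=
    fun s => Finset.card_filter_add_card_filter_not (fun v => s v = b)
  -- I covers all vertices outside it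
  have hcov : ∀ v, v ∉ I → ∃ w ∈ I, G.Adj v w := by
    intro v hv
    by_contra hno
    push_neg at hno
    have hins : IndepSet (insert v I) := by
      rw [hIndep]
      intro x hx y hy hadj
      rw [Finset.mem_insert] at hx hy
      rcases hx with rfl | hx
      · rcases hy with rfl | hy
        · exact G.loopless.irrefl _ hadj
        · exact hno y hy hadj
      · rcases hy with rfl | hy
        · exact hno x hx hadj.symm
        · exact hIrw x hx y hy hadj
    have := hoptIS₂ _ hins
    rw [Finset.card_insert_of_notMem hv, hIcard] at this
    omega
  -- counting: n ≤ 4 * optIS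
  have hsubset : Iᶜ ⊆ I.biUnion (fun w => G.neighborFinset w) := by
    intro v hv
    obtain ⟨w, hwI, hadj⟩ := hcov v (Finset.mem_compl.mp hv)
    exact Finset.mem_biUnion.mpr ⟨w, hwI, (SimpleGraph.mem_neighborFinset _ _ _).mpr hadj.symm⟩
  have hcount : (Iᶜ : Finset V).card ≤ 3 * optIS := by
    calc (Iᶜ : Finset V).card ≤ (I.biUnion (fun w => G.neighborFinset w)).card :=
          Finset.card_le_card hsubset
      _ ≤ ∑ w ∈ I, (G.neighborFinset w).card := Finset.card_biUnion_le
      _ ≤ I.card * 3 := Finset.sum_le_card_nsmul I _ 3 (fun w _ => hdeg w)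
      _ = 3 * optIS := by rw [hIcard]; ring
  have hcompl : (Iᶜ : Finset V).card = n - I.card := Finset.card_compl I
  have hIlen : I.card ≤ n := Finset.card_le_univ I
  have hn4 : n ≤ 4 * optIS := by omega
  -- the optimal independent set gives a feasible assignment
  have hs0feas : Feasible (fun v => if v ∈ I then b else a) := by
    rw [hFeasible]
    intro v w hadj
    by_cases hv : v ∈ I <;> by_cases hw : w ∈ I
    · exact absurd hadj (hIrw v hv w hw)
    · simp [hv, hw]
    · simp [hv, hw]
    · simp [hv, hw]
  have hfilt : (Finset.univ.filter fun v => (fun v => if v ∈ I then b else a) v = b) = I := by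
    ext v
    simp only [Finset.mem_filter, Finset.mem_univ, true_and]
    by_cases hv : v ∈ I <;> simp [hv] <;> omega
  have hlow : b * optIS
      + a * (Finset.univ.filter fun v =>
          ¬ (fun v => if v ∈ I then b else a) v = b).card ≤ optMS := by
    have := hsum _ hs0feas
    rw [hfilt, hIcard] at this
    rw [← this]
    exact hoptMS₂ _ hs0feas
  have hm0 : optIS + (Finset.univ.filter fun v =>
      ¬ (fun v => if v ∈ I then b else a) v = b).card = n := by
    have := hcards (fun v => if v ∈ I then b else a)
    rw [hfilt, hIcard] at this
    exact this
  set m0 := (Finset.univ.filter fun v =>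
      ¬ (fun v => if v ∈ I then b else a) v = b).card with hm0def
  constructor
  · -- optMS ≤ 4 * b * optIS
    obtain ⟨t, ht, hteq⟩ := hoptMS₁
    have hst := hsum t ht
    have hct := hcards t
    set kt := (Finset.univ.filter fun v => t v = b).card with hkt
    set mt := (Finset.univ.filter fun v => ¬ t v = b).card with hmt
    calc optMS = b * kt + a * mt := by rw [← hteq, hst]
      _ ≤ b * kt + b * mt := by
          exact Nat.add_le_add_left (Nat.mul_le_mul hab.le le_rfl) _
      _ = b * n := by rw [← Nat.mul_add, hct]
      _ ≤ b * (4 * optIS) := Nat.mul_le_mul le_rfl hn4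
      _ = 4 * b * optIS := by ring
  · intro s hs
    refine ⟨hindep s hs, ?_⟩
    have hss := hsum s hs
    have hcs := hcards s
    set k := (Finset.univ.filter fun v => s v = b).card with hk
    set m := (Finset.univ.filter fun v => ¬ s v = b).card with hm
    have hkIS : k ≤ optIS := hoptIS₂ _ (hindep s hs)
    have hsle : ∑ v, s v ≤ optMS := hoptMS₂ s hs
    zify [hab.le, hkIS, hsle]
    have hZs : (∑ v, s v : ℤ) = b * k + a * m := by exact_mod_cast hss
    have hZc : (k : ℤ) + m = n := by exact_mod_cast hcs
    have hZlow : (b : ℤ) * optIS + a * m0 ≤ optMS := by exact_mod_cast hlow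
    have hZm0 : (optIS : ℤ) + m0 = n := by exact_mod_cast hm0
    nlinarith [hZs, hZc, hZlow, hZm0]
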